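/- arXiv:1203.3790 — 6 statements merged into one kernel-verified Lean document; each statement's English description precedes it below -/
import Mathlib

section
/- With the notation of the block decomposition of an orthogonal projection P on V ⊕ N (blocks R, S, T), the kernel of S splits orthogonally as ker S = ker R ⊕ ker(Id − R). That is, every v ∈ ker S decomposes uniquely as v = v₀ + v₁ with Rv₀ = 0, (Id−R)v₁ = 0, and ⟨v₀, v₁⟩ = 0; conversely ker R ⊆ ker S and ker(Id−R) ⊆ ker S. -/
open RealInnerProductSpace

/-- The kernel of `S` splits orthogonally as `ker S = ker R ⊕ ker (Id - R)`. -/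
theorem ker_S_eq_ker_R_orthogonal_sum_ker_id_sub_R
    {V N : Type*} [NormedAddCommGroup V] [InnerProductSpace ℝ V] [FiniteDimensional ℝ V]
    [NormedAddCommGroup N] [InnerProductSpace ℝ N] [FiniteDimensional ℝ N]
    (R : V →ₗ[ℝ] V) (S : V →ₗ[ℝ] N)
    (hR : LinearMap.adjoint R = R)
    (hStS : LinearMap.adjoint S ∘ₗ S = R ∘ₗ (LinearMap.id - R)) :
    LinearMap.ker S = LinearMap.ker R ⊔ LinearMap.ker (LinearMap.id - R) ∧
      ∀ v₀ ∈ LinearMap.ker R, ∀ v₁ ∈ LinearMap.ker (LinearMap.id - R),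
        ⟪v₀, v₁⟫ = 0 := by
  -- key: Sv = 0 ↔ R (v - R v) = 0
  have key : ∀ v : V, S v = 0 ↔ R (v - R v) = 0 := by
    intro v
    constructor
    · intro h
      have : (R ∘ₗ (LinearMap.id - R)) v = 0 := by
        rw [← hStS]
        simp [LinearMap.comp_apply, h]
      simpa [LinearMap.comp_apply, LinearMap.sub_apply] using this
    · intro h
      have h' : (LinearMap.adjoint S ∘ₗ S) v = 0 := by
        rw [hStS]
        simpa [LinearMap.comp_apply, LinearMap.sub_apply] using h
      have hnorm : ⟪S v, S v⟫ = 0 := by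
        have hz : (LinearMap.adjoint S) (S v) = 0 := h'
        have h2 : ⟪v, (LinearMap.adjoint S) (S v)⟫ = 0 := by rw [hz, inner_zero_right]
        rwa [LinearMap.adjoint_inner_right] at h2
      exact inner_self_eq_zero.mp hnorm
  constructor
  · apply le_antisymm
    · intro v hv
      have hv' : R (v - R v) = 0 := (key v).mp hv
      have hsplit : v = (v - R v) + R v := by abel
      rw [hsplit]
      apply Submodule.add_mem_sup
      · exact hv'
      · rw [LinearMap.mem_ker, LinearMap.sub_apply, LinearMap.id_apply]
        rw [← map_sub]
        exact hv'
    · rw [sup_le_iff]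
      constructor
      · intro v hv
        have hv : R v = 0 := hv
        exact (key v).mpr (by simp [map_sub, hv])
      · intro v hv
        have hv : v - R v = 0 := by simpa [LinearMap.sub_apply] using hv
        exact (key v).mpr (by rw [hv, map_zero])
  · intro v₀ h₀ v₁ h₁
    have h₀ : R v₀ = 0 := h₀
    have h₁ : R v₁ = v₁ := by
      have : v₁ - R v₁ = 0 := by simpa [LinearMap.sub_apply] using h₁
      exact (sub_eq_zero.mp this).symm
    calc ⟪v₀, v₁⟫ = ⟪v₀, R v₁⟫ := by rw [h₁]
      _ = ⟪LinearMap.adjoint R v₀, v₁⟫ := (LinearMap.adjoint_inner_left R v₁ v₀).symm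
      _ = 0 := by rw [hR, h₀, inner_zero_left]
end

section
/- With the notation of the block decomposition of an orthogonal projection P on V ⊕ N (blocks R, S, Sᵗ, T), the orthogonal complement of the image of S in N splits orthogonally as (S(V))^⊥ = ker T ⊕ ker(Id − T). -/
open RealInnerProductSpace

/-- The orthogonal complement of `S(V)` in `N` splits orthogonally as
`(S(V))ᗮ = ker T ⊕ ker (Id - T)`. -/
theorem range_S_orthogonal_eq_ker_T_sup_ker_id_sub_T
    {V N : Type*} [NormedAddCommGroup V] [InnerProductSpace ℝ V] [FiniteDimensional ℝ V]
    [NormedAddCommGroup N] [InnerProductSpace ℝ N] [FiniteDimensional ℝ N]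
    (R : V →ₗ[ℝ] V) (S : V →ₗ[ℝ] N) (T : N →ₗ[ℝ] N)
    (hT : LinearMap.adjoint T = T)
    (hSSt : S ∘ₗ LinearMap.adjoint S = T ∘ₗ (LinearMap.id - T)) :
    (LinearMap.range S)ᗮ = LinearMap.ker T ⊔ LinearMap.ker (LinearMap.id - T) ∧
      ∀ n₀ ∈ LinearMap.ker T, ∀ n₁ ∈ LinearMap.ker (LinearMap.id - T),
        ⟪n₀, n₁⟫ = 0 := by
  have key : ∀ n : N, S (LinearMap.adjoint S n) = T n - T (T n) := by
    intro n
    have := congrArg (fun f => f n) hSSt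
    simpa using this
  have memker : ∀ n : N, n ∈ LinearMap.ker (LinearMap.id (R := ℝ) (M := N) - T) ↔ n - T n = 0 := by
    intro n
    simp [LinearMap.mem_ker]
  -- adjoint S n = 0 iff T n - T (T n) = 0
  have hadj_of : ∀ n : N, T n - T (T n) = 0 → LinearMap.adjoint S n = 0 := by
    intro n h
    have h1 : ⟪LinearMap.adjoint S n, LinearMap.adjoint S n⟫ = 0 := by
      rw [LinearMap.adjoint_inner_left, key, h, inner_zero_right]
    exact inner_self_eq_zero.mp h1
  have mem_orth : ∀ n : N, LinearMap.adjoint S n = 0 → n ∈ (LinearMap.range S)ᗮ := by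
    intro n h m hm
    obtain ⟨v, rfl⟩ := hm
    rw [real_inner_comm, ← LinearMap.adjoint_inner_left, h, inner_zero_left]
  constructor
  · apply le_antisymm
    · intro n hn
      have hadj : LinearMap.adjoint S n = 0 := by
        have h : ⟪LinearMap.adjoint S n, LinearMap.adjoint S n⟫ = 0 := by
          rw [LinearMap.adjoint_inner_right]
          exact hn (S (LinearMap.adjoint S n)) ⟨_, rfl⟩
        exact inner_self_eq_zero.mp h
      have hkey : T (n - T n) = 0 := by
        have := key n
        rw [hadj, map_zero] at this
        rw [map_sub]
        exact this.symm
      have hsplit : n = (n - T n) + T n := by abel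
      rw [hsplit]
      apply Submodule.add_mem_sup
      · exact hkey
      · rw [memker]
        have : T n - T (T n) = 0 := by rw [← map_sub]; exact hkey
        simpa using this
    · apply sup_le
      · intro n hn
        have hn : T n = 0 := hn
        exact mem_orth n (hadj_of n (by rw [hn]; simp))
      · intro n hn
        have hn : n - T n = 0 := (memker n).mp hn
        have hTn : T n = n := by
          have := sub_eq_zero.mp hn
          exact this.symm
        exact mem_orth n (hadj_of n (by rw [hTn]; exact hn))
  · intro n₀ h₀ n₁ h₁
    have h₀ : T n₀ = 0 := h₀
    have h₁ : T n₁ = n₁ := (sub_eq_zero.mp ((memker n₁).mp h₁)).symm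
    calc ⟪n₀, n₁⟫ = ⟪n₀, T n₁⟫ := by rw [h₁]
      _ = ⟪LinearMap.adjoint T n₀, n₁⟫ := by rw [LinearMap.adjoint_inner_left]
      _ = 0 := by rw [hT, h₀, inner_zero_left]
end

section
/- With the notation of the block decomposition of an orthogonal projection P on V ⊕ N (blocks R, S, T), the restriction of T to (S(V))^⊥ is the orthogonal projection of (S(V))^⊥ onto ker(Id − T). In particular, for all ξ, η ∈ (S(V))^⊥, ⟨Pξ, Pη⟩ = ⟨Tξ, η⟩ (identifying ξ, η ∈ N with elements of V ⊕ N). -/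
open RealInnerProductSpace

/-- The restriction of `T` to `(S(V))ᗮ` is the orthogonal projection onto
`ker (Id - T)`; in particular `⟨Pξ, Pη⟩ = ⟨Tξ, η⟩` on `(S(V))ᗮ`, where
`P` applied to `ξ ∈ N ⊆ V ⊕ N` is `(Sᵗξ, Tξ)`. -/
theorem T_restricted_is_orthogonal_projection
    {V N : Type*} [NormedAddCommGroup V] [InnerProductSpace ℝ V] [FiniteDimensional ℝ V]
    [NormedAddCommGroup N] [InnerProductSpace ℝ N] [FiniteDimensional ℝ N]
    (R : V →ₗ[ℝ] V) (S : V →ₗ[ℝ] N) (T : N →ₗ[ℝ] N)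
    (hT : LinearMap.adjoint T = T)
    (hSSt : S ∘ₗ LinearMap.adjoint S = T ∘ₗ (LinearMap.id - T)) :
    (∀ ξ ∈ (LinearMap.range S)ᗮ,
        T ξ ∈ LinearMap.ker (LinearMap.id - T) ∧ ξ - T ξ ∈ LinearMap.ker T) ∧
      ∀ ξ ∈ (LinearMap.range S)ᗮ, ∀ η ∈ (LinearMap.range S)ᗮ,
        ⟪(LinearMap.adjoint S) ξ, (LinearMap.adjoint S) η⟫ + ⟪T ξ, T η⟫ =
          ⟪T ξ, η⟫ := by
  -- First: for ξ ⊥ range S, the adjoint of S kills ξ.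
  have hadj : ∀ ξ ∈ (LinearMap.range S)ᗮ, LinearMap.adjoint S ξ = 0 := by
    intro ξ hξ
    rw [← inner_self_eq_zero (𝕜 := ℝ)]
    rw [LinearMap.adjoint_inner_left]
    rw [real_inner_comm]; exact hξ _ ⟨_, rfl⟩
  -- Hence T(ξ - Tξ) = 0 for such ξ.
  have hkey : ∀ ξ ∈ (LinearMap.range S)ᗮ, T ξ - T (T ξ) = 0 := by
    intro ξ hξ
    have := congrArg (fun f => f ξ) hSSt
    simp only [LinearMap.comp_apply, LinearMap.sub_apply, LinearMap.id_apply,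
      map_sub, hadj ξ hξ, map_zero] at this
    exact this.symm
  constructor
  · intro ξ hξ
    have h := hkey ξ hξ
    constructor
    · simp only [LinearMap.mem_ker, LinearMap.sub_apply, LinearMap.id_apply]
      linear_combination (norm := abel) h
    · simp only [LinearMap.mem_ker, map_sub]
      exact sub_eq_zero.mpr (sub_eq_zero.mp h)
  · intro ξ hξ η hη
    rw [hadj ξ hξ, inner_zero_left, zero_add, ← LinearMap.adjoint_inner_left, hT]
    have h := hkey ξ hξ
    have : T (T ξ) = T ξ := (sub_eq_zero.mp h).symm
    rw [this]
end

section
/- Let V, N be finite-dimensional real inner product spaces, P a self-adjoint idempotent on V ⊕ N with block components R, S, T as above, and suppose L is a subspace of (S(V))^⊥ ⊆ N and λ ∈ ℝ are such that (T − λ·Id)(L) ⊆ L^⊥. Then for all ξ, η ∈ L one has ⟨Pξ, Pη⟩ = λ⟨ξ, η⟩; i.e., P restricted to L is a similarity of ratio √λ (and in particular λ ∈ [0,1] if L ≠ 0). -/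
open RealInnerProductSpace

/-- If `L ⊆ (S(V))ᗮ` with `(T - λ·Id)(L) ⊆ Lᗮ`, then `P` restricted to `L` is a
similarity of ratio `√λ`: `⟨Pξ, Pη⟩ = λ⟨ξ, η⟩` for `ξ, η ∈ L` (with
`Pξ = (Sᵗξ, Tξ)`), and `λ ∈ [0,1]` if `L ≠ 0`. -/
theorem similarity_of_ratio_sqrt_lambda
    {V N : Type*} [NormedAddCommGroup V] [InnerProductSpace ℝ V] [FiniteDimensional ℝ V]
    [NormedAddCommGroup N] [InnerProductSpace ℝ N] [FiniteDimensional ℝ N]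
    (R : V →ₗ[ℝ] V) (S : V →ₗ[ℝ] N) (St : N →ₗ[ℝ] V) (T : N →ₗ[ℝ] N)
    (hR : LinearMap.adjoint R = R) (hT : LinearMap.adjoint T = T)
    (hSt : St = LinearMap.adjoint S)
    (hidem1 : ∀ (v : V) (n : N), R (R v + St n) + St (S v + T n) = R v + St n)
    (hidem2 : ∀ (v : V) (n : N), S (R v + St n) + T (S v + T n) = S v + T n)
    (L : Submodule ℝ N) (hL : L ≤ (LinearMap.range S)ᗮ) (lam : ℝ)
    (hTL : ∀ ξ ∈ L, ∀ η ∈ L, ⟪T ξ - lam • ξ, η⟫ = 0) :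
    (∀ ξ ∈ L, ∀ η ∈ L, ⟪St ξ, St η⟫ + ⟪T ξ, T η⟫ = lam * ⟪ξ, η⟫) ∧
      (L ≠ ⊥ → 0 ≤ lam ∧ lam ≤ 1) := by
  have key : ∀ ξ ∈ L, ∀ η ∈ L, ⟪St ξ, St η⟫ + ⟪T ξ, T η⟫ = lam * ⟪ξ, η⟫ := by
    intro ξ hξ η hη
    have h2 : S (St η) + T (T η) = T η := by simpa using hidem2 0 η
    have e1 : ⟪St ξ, St η⟫ = ⟪ξ, S (St η)⟫ := by
      rw [hSt, LinearMap.adjoint_inner_left]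
    have e2 : ⟪T ξ, T η⟫ = ⟪ξ, T (T η)⟫ := by
      nth_rewrite 1 [← hT]; exact LinearMap.adjoint_inner_left _ _ _
    have e3 : ⟪ξ, T η⟫ = ⟪T ξ, η⟫ := by
      nth_rewrite 2 [← hT]; exact (LinearMap.adjoint_inner_left _ _ _).symm
    have e4 : ⟪T ξ, η⟫ = lam * ⟪ξ, η⟫ := by
      have := hTL ξ hξ η hη
      rw [inner_sub_left, real_inner_smul_left] at this
      linarith
    calc ⟪St ξ, St η⟫ + ⟪T ξ, T η⟫ = ⟪ξ, S (St η) + T (T η)⟫ := by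
          rw [inner_add_right, e1, e2]
      _ = ⟪ξ, T η⟫ := by rw [h2]
      _ = lam * ⟪ξ, η⟫ := by rw [e3, e4]
  refine ⟨key, fun hne => ?_⟩
  obtain ⟨ξ, hξ, hξ0⟩ := Submodule.exists_mem_ne_zero_of_ne_bot hne
  have hk := key ξ hξ ξ hξ
  rw [real_inner_self_eq_norm_sq, real_inner_self_eq_norm_sq,
    real_inner_self_eq_norm_sq] at hk
  have hpos : (0:ℝ) < ‖ξ‖ := norm_pos_iff.mpr hξ0
  have hc2 : (0:ℝ) < ‖ξ‖ ^ 2 := pow_pos hpos 2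
  have hlam0 : 0 ≤ lam := by nlinarith [sq_nonneg ‖St ξ‖, sq_nonneg ‖T ξ‖, hc2]
  refine ⟨hlam0, ?_⟩
  have hTn : ‖T ξ‖ ^ 2 ≤ lam * ‖ξ‖ ^ 2 := by nlinarith [sq_nonneg ‖St ξ‖]
  have hTξ : ⟪T ξ, ξ⟫ = lam * ‖ξ‖ ^ 2 := by
    have := hTL ξ hξ ξ hξ
    rw [inner_sub_left, real_inner_smul_left, real_inner_self_eq_norm_sq] at this
    linarith
  have hcs : ⟪T ξ, ξ⟫ ≤ ‖T ξ‖ * ‖ξ‖ := real_inner_le_norm _ _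
  have h1 : (lam * ‖ξ‖ ^ 2) ^ 2 ≤ (‖T ξ‖ * ‖ξ‖) ^ 2 :=
    pow_le_pow_left₀ (by positivity) (hTξ ▸ hcs) 2
  have h4 : lam ^ 2 * (‖ξ‖ ^ 2 * ‖ξ‖ ^ 2) ≤ lam * (‖ξ‖ ^ 2 * ‖ξ‖ ^ 2) := by
    nlinarith [h1, mul_le_mul_of_nonneg_right hTn hc2.le]
  have h3 : lam ^ 2 ≤ lam := le_of_mul_le_mul_right h4 (mul_pos hc2 hc2)
  nlinarith [h3]
end

section
/- Let V, N be finite-dimensional real inner product spaces and R : V → V, S : V → N, T : N → N the block components of the orthogonal projection P : V ⊕ N → V ⊕ N. Suppose S has rank one with S X = ⟨X,B⟩ S B for a unit vector B, R = λ⟨·,B⟩B with λ ∈ (0,1), and |SB|² = λ(1−λ). Then the kernel of P (i.e., of the projection π₂ restricted to V ⊕ N) is spanned by ker T ⊆ N together with the vector (λ B, −S B) ∈ V ⊕ N. -/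
open RealInnerProductSpace

/-- Kernel of the projection `π₂` on `V ⊕ N` in the rank-one situation:
with `(Id-R)X = λ⟨X,B⟩B`, `SX = ⟨X,B⟩SB`, `Sᵗn = ⟨SB,n⟩B`, `|SB|² = λ(1-λ)`,
`T(SB) = λ·SB`, `λ ∈ (0,1)`, the kernel of `P(v,n) = (Rv + Sᵗn, Sv + Tn)` is
spanned by `(λB, -SB)` together with `{0} × ker T`. -/
theorem kernel_of_projection_rank_one
    {V N : Type*} [NormedAddCommGroup V] [InnerProductSpace ℝ V] [FiniteDimensional ℝ V]
    [NormedAddCommGroup N] [InnerProductSpace ℝ N] [FiniteDimensional ℝ N]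
    (R : V →ₗ[ℝ] V) (S : V →ₗ[ℝ] N) (St : N →ₗ[ℝ] V) (T : N →ₗ[ℝ] N)
    (B : V) (lam : ℝ)
    (hB : ‖B‖ = 1) (hlam0 : 0 < lam) (hlam1 : lam < 1)
    (hR : ∀ X : V, R X = X - (lam * ⟪X, B⟫) • B)
    (hS : ∀ X : V, S X = ⟪X, B⟫ • S B)
    (hSt : ∀ n : N, St n = ⟪S B, n⟫ • B)
    (hSB : ‖S B‖ ^ 2 = lam * (1 - lam))
    (hTSB : T (S B) = lam • S B)
    (hT : LinearMap.adjoint T = T) :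
    ∀ (v : V) (n : N), (R v + St n = 0 ∧ S v + T n = 0) ↔
      ∃ c : ℝ, ∃ u ∈ LinearMap.ker T,
        v = c • (lam • B) ∧ n = c • (-(S B)) + u := by
  have hlamne : lam ≠ 0 := ne_of_gt hlam0
  have hBB : ⟪B, B⟫ = 1 := by
    rw [real_inner_self_eq_norm_sq, hB]; ring
  have hSBu : ∀ u : N, T u = 0 → ⟪S B, u⟫ = 0 := by
    intro u hu
    have h1 : ⟪T (S B), u⟫ = ⟪S B, T u⟫ := by
      conv_lhs => rw [← hT]
      exact LinearMap.adjoint_inner_left T u (S B)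
    rw [hTSB, hu, inner_zero_right, real_inner_smul_left] at h1
    exact (mul_eq_zero.mp h1).resolve_left hlamne
  have hSBSB : ⟪S B, S B⟫ = lam * (1 - lam) := by
    rw [real_inner_self_eq_norm_sq, ← hSB]
  intro v n
  constructor
  · rintro ⟨h1, h2⟩
    rw [hR, hSt] at h1
    rw [hS] at h2
    set μ := ⟪v, B⟫ with hμ
    have hv : v = (lam * μ - ⟪S B, n⟫) • B := by
      rw [sub_smul]
      linear_combination (norm := module) h1
    have hinner : μ = (lam * μ - ⟪S B, n⟫) := by
      conv_lhs => rw [hμ, hv]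
      rw [real_inner_smul_left, hBB, mul_one]
    have hSBn : ⟪S B, n⟫ = -(1 - lam) * μ := by linarith
    refine ⟨μ / lam, n + (μ / lam) • S B, ?_, ?_, ?_⟩
    · rw [LinearMap.mem_ker, map_add, map_smul, hTSB]
      have hTn : T n = -(μ • S B) := by
        linear_combination (norm := module) h2
      rw [hTn]
      rw [smul_smul]
      rw [div_mul_cancel₀ _ hlamne]
      module
    · rw [hv, hSBn, smul_smul]
      congr 1
      field_simp
      ring
    · module
  · rintro ⟨c, u, hu, hv, hn⟩
    rw [LinearMap.mem_ker] at hu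
    have hvB : ⟪v, B⟫ = c * lam := by
      rw [hv, smul_smul, real_inner_smul_left, hBB, mul_one]
    have hSBn : ⟪S B, n⟫ = -(c * (lam * (1 - lam))) := by
      rw [hn, inner_add_right, real_inner_smul_right, inner_neg_right,
        hSBSB, hSBu u hu]
      ring
    constructor
    · rw [hR, hSt, hvB, hSBn, hv]
      match_scalars <;> ring
    · rw [hS, hvB, hn, map_add, map_smul, map_neg, hTSB, hu]
      match_scalars <;> ring
end

section
/- Let V, N be finite-dimensional real inner product spaces, S : V → N linear, Φ : V → V self-adjoint. Suppose that for all X, Y, Z ∈ V: ⟨Φ X, Z⟩ S Y = ⟨Φ Y, Z⟩ S X. If Φ ≠ 0 and S ≠ 0, then there is a unit vector B ∈ V and nonzero μ ∈ ℝ such that S X = ⟨X,B⟩ S B and Φ X = μ⟨X,B⟩ B for all X ∈ V. -/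
open RealInnerProductSpace

private lemma smul_cancel_aux {M : Type*} [AddCommGroup M] [Module ℝ M] {u : M}
    (hu : u ≠ 0) {a b : ℝ} (hab : a • u = b • u) : a = b := by
  have h0 : (a - b) • u = 0 := by rw [sub_smul, hab, sub_self]
  rcases smul_eq_zero.mp h0 with h' | h'
  · linarith [h']
  · exact absurd h' hu

/-- If `⟨ΦX, Z⟩·SY = ⟨ΦY, Z⟩·SX` for all `X, Y, Z` with `Φ` self-adjoint, and
both `Φ ≠ 0` and `S ≠ 0`, then there are a unit vector `B` and `μ ≠ 0` with
`SX = ⟨X,B⟩SB` and `ΦX = μ⟨X,B⟩B`. -/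
theorem rank_one_structure_of_codazzi_identity
    {V N : Type*} [NormedAddCommGroup V] [InnerProductSpace ℝ V] [FiniteDimensional ℝ V]
    [NormedAddCommGroup N] [InnerProductSpace ℝ N] [FiniteDimensional ℝ N]
    (S : V →ₗ[ℝ] N) (Φ : V →ₗ[ℝ] V)
    (hΦadj : LinearMap.adjoint Φ = Φ)
    (h : ∀ X Y Z : V, ⟪Φ X, Z⟫ • S Y = ⟪Φ Y, Z⟫ • S X)
    (hΦ : Φ ≠ 0) (hS : S ≠ 0) :
    ∃ B : V, ‖B‖ = 1 ∧ ∃ μ : ℝ, μ ≠ 0 ∧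
      (∀ X : V, S X = ⟪X, B⟫ • S B) ∧
      (∀ X : V, Φ X = (μ * ⟪X, B⟫) • B) := by
  classical
  have hsym : ∀ x y : V, ⟪Φ x, y⟫ = ⟪x, Φ y⟫ := by
    intro x y
    conv_lhs => rw [← hΦadj]
    exact LinearMap.adjoint_inner_left Φ y x
  obtain ⟨X₀, hX₀⟩ : ∃ X, Φ X ≠ 0 := by
    by_contra hcon
    push_neg at hcon
    exact hΦ (LinearMap.ext fun x => by simpa using hcon x)
  have hc : (⟪Φ X₀, Φ X₀⟫ : ℝ) ≠ 0 := by
    simpa [inner_self_eq_zero] using hX₀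
  -- the vector A with S Y = ⟪Y, A⟫ • S X₀
  obtain ⟨A, hinnerA⟩ :
      ∃ A : V, ∀ Y : V, ⟪Y, A⟫ = (⟪Φ X₀, Φ X₀⟫ : ℝ)⁻¹ * ⟪Φ Y, Φ X₀⟫ := by
    refine ⟨(⟪Φ X₀, Φ X₀⟫ : ℝ)⁻¹ • Φ (Φ X₀), fun Y => ?_⟩
    rw [real_inner_smul_right]
    congr 1
    exact (hsym Y (Φ X₀)).symm
  have hSA : ∀ Y : V, S Y = ⟪Y, A⟫ • S X₀ := by
    intro Y
    have h1 := h X₀ Y (Φ X₀)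
    rw [hinnerA, mul_smul, ← h1, smul_smul, inv_mul_cancel₀ hc, one_smul]
  have hSX₀ : S X₀ ≠ 0 := by
    intro h0
    exact hS (LinearMap.ext fun Y => by simp [hSA Y, h0])
  have hAne : A ≠ 0 := by
    intro h0
    exact hS (LinearMap.ext fun Y => by simp [hSA Y, h0])
  have hAA : (⟪A, A⟫ : ℝ) ≠ 0 := by simpa [inner_self_eq_zero] using hAne
  -- key scalar identity
  have key : ∀ X Y Z : V, ⟪Φ X, Z⟫ * ⟪Y, A⟫ = ⟪Φ Y, Z⟫ * ⟪X, A⟫ := by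
    intro X Y Z
    have h1 := h X Y Z
    rw [hSA Y, hSA X, smul_smul, smul_smul] at h1
    exact smul_cancel_aux hSX₀ h1
  -- rank one structure of Φ
  obtain ⟨w, hΦw⟩ : ∃ w : V, ∀ X : V, Φ X = ⟪X, A⟫ • w := by
    refine ⟨(⟪A, A⟫ : ℝ)⁻¹ • Φ A, fun X => ?_⟩
    apply ext_inner_right ℝ
    intro Z
    rw [real_inner_smul_left, real_inner_smul_left]
    have hk := key X A Z
    field_simp
    linarith
  have hwne : w ≠ 0 := by
    intro h0
    exact hΦ (LinearMap.ext fun X => by simp [hΦw X, h0])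
  have hww : (⟪w, w⟫ : ℝ) ≠ 0 := by simpa [inner_self_eq_zero] using hwne
  -- self-adjointness identity
  have hkey2 : ∀ Z : V, ⟪Z, A⟫ * ⟪w, w⟫ = ⟪w, A⟫ * ⟪Z, w⟫ := by
    intro Z
    have h1 := hsym Z w
    rw [hΦw Z, hΦw w, real_inner_smul_left, real_inner_smul_right] at h1
    linarith
  have hwA : (⟪w, A⟫ : ℝ) ≠ 0 := by
    intro h0
    apply hAA
    have h1 := hkey2 A
    rw [h0, zero_mul] at h1
    rcases mul_eq_zero.mp h1 with h' | h'
    · exact h'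
    · exact absurd h' hww
  set t : ℝ := ⟪w, A⟫ / ⟪w, w⟫ with ht
  have htne : t ≠ 0 := div_ne_zero hwA hww
  have hApar : A = t • w := by
    apply ext_inner_right ℝ
    intro Z
    have e1 : (⟪A, Z⟫ : ℝ) = ⟪Z, A⟫ := real_inner_comm _ _
    have e2 : (⟪w, Z⟫ : ℝ) = ⟪Z, w⟫ := real_inner_comm _ _
    rw [real_inner_smul_left, e1, e2, ht]
    field_simp
    linear_combination hkey2 Z
  have hwA' : w = t⁻¹ • A := by
    rw [hApar, smul_smul, inv_mul_cancel₀ htne, one_smul]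
  have hΦA' : ∀ X : V, Φ X = (t⁻¹ * ⟪X, A⟫) • A := by
    intro X
    rw [hΦw X, hwA', smul_smul, mul_comm]
  -- normalize
  have hAnorm : ‖A‖ ≠ 0 := norm_ne_zero_iff.mpr hAne
  refine ⟨‖A‖⁻¹ • A, ?_, t⁻¹ * ‖A‖ ^ 2, ?_, ?_, ?_⟩
  · rw [norm_smul]
    simp [abs_of_nonneg (inv_nonneg.mpr (norm_nonneg A)), inv_mul_cancel₀ hAnorm]
  · exact mul_ne_zero (inv_ne_zero htne) (pow_ne_zero 2 hAnorm)
  · intro X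
    rw [hSA X, hSA (‖A‖⁻¹ • A), real_inner_smul_right, real_inner_smul_left,
      real_inner_self_eq_norm_sq, smul_smul]
    congr 1
    have h1 : ‖A‖⁻¹ * ‖A‖ = 1 := inv_mul_cancel₀ hAnorm
    linear_combination (-(⟪X, A⟫ * (1 + ‖A‖⁻¹ * ‖A‖))) * h1
  · intro X
    rw [hΦA' X, real_inner_smul_right, smul_smul]
    congr 1
    have h1 : ‖A‖⁻¹ * ‖A‖ = 1 := inv_mul_cancel₀ hAnorm
    linear_combination (-(t⁻¹ * ⟪X, A⟫ * (1 + ‖A‖⁻¹ * ‖A‖))) * h1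
end
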